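/- Let P and A be Hopf algebras and π : P → A a surjective Hopf algebra map, with right coaction Δ_R = (id ⊗ π) ∘ Δ_P on P. Then for each a ∈ A and u ∈ π⁻¹(a), χ(S(u₁) ⊗ u₂) = 1 ⊗ a; hence τ(a) = S(u₁) ⊗_B u₂ defines a translation map on the quantum principal bundle over the homogeneous space B = P^A. -/

import Mathlib

open TensorProduct

noncomputable section

variable (k : Type*) [Field k]

/-- Convolution product of linear maps from a coalgebra to an algebra:
`(f * g)(a) = f(a₁) g(a₂)`. -/
def conv {C B : Type*} [AddCommMonoid C] [Module k C] [Coalgebra k C]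
    [Semiring B] [Algebra k B] (f g : C →ₗ[k] B) : C →ₗ[k] B :=
  LinearMap.mul' k B ∘ₗ TensorProduct.map f g ∘ₗ Coalgebra.comul

/-- The convolution unit `a ↦ ε(a) 1`. -/
def convOne {C B : Type*} [AddCommMonoid C] [Module k C] [Coalgebra k C]
    [Semiring B] [Algebra k B] : C →ₗ[k] B :=
  Algebra.linearMap k B ∘ₗ Coalgebra.counit

variable (A P : Type*) [Ring A] [HopfAlgebra k A] [Ring P] [Algebra k P]

/-- The canonical map `χ : P ⊗ P → P ⊗ A`, `u ⊗ v ↦ u v⁽¹⁾ ⊗ v⁽²⁾`,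
i.e. `χ = (mult ⊗ id) ∘ (id ⊗ Δ_R)`. -/
def chiMap (ΔR : P →ₗ[k] P ⊗[k] A) : P ⊗[k] P →ₗ[k] P ⊗[k] A :=
  TensorProduct.map (LinearMap.mul' k P) LinearMap.id ∘ₗ
    (TensorProduct.assoc k P P A).symm.toLinearMap ∘ₗ
    TensorProduct.map LinearMap.id ΔR

/-- The right adjoint coaction `Ad(a) = a₂ ⊗ S(a₁)a₃`. -/
def adCoaction : A →ₗ[k] A ⊗[k] A :=
  TensorProduct.map LinearMap.id (LinearMap.mul' k A) ∘ₗ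
    (TensorProduct.leftComm k A A A).toLinearMap ∘ₗ
    TensorProduct.map (HopfAlgebra.antipode (R := k)) LinearMap.id ∘ₗ
    TensorProduct.map LinearMap.id Coalgebra.comul ∘ₗ Coalgebra.comul

/-- The kernel of `P ⊗ P → P ⊗_B P`: the span of elements `u b ⊗ v - u ⊗ b v`
with `b` a coinvariant (`Δ_R b = b ⊗ 1`), so that `P ⊗_B P = (P ⊗ P) ⧸ relSub`. -/
def relSub (ΔR : P →ₗ[k] P ⊗[k] A) : Submodule k (P ⊗[k] P) :=
  Submodule.span k {x | ∃ u v b : P, ΔR b = b ⊗ₜ 1 ∧ x = (u * b) ⊗ₜ v - u ⊗ₜ (b * v)}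

/-- The image of `B ⊗ B` in `P ⊗ P`, where `B = Pᴬ` is the coinvariant subalgebra. -/
def BBsub (ΔR : P →ₗ[k] P ⊗[k] A) : Submodule k (P ⊗[k] P) :=
  Submodule.span k {x | ∃ b c : P, ΔR b = b ⊗ₜ 1 ∧ ΔR c = c ⊗ₜ 1 ∧ x = b ⊗ₜ c}

/-- The submodule `P B² P ⊆ P ⊗ P`, where `B² = ker(mult : B ⊗ B → B)`. -/
def PB2P (ΔR : P →ₗ[k] P ⊗[k] A) : Submodule k (P ⊗[k] P) :=
  Submodule.span k {w | ∃ u v : P, ∃ x ∈ BBsub k A P ΔR ⊓ LinearMap.ker (LinearMap.mul' k P),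
    w = TensorProduct.map (LinearMap.mulLeft k u) (LinearMap.mulRight k v) x}

/-- For a surjective Hopf algebra map `π : P → A` and the pushout coaction
`Δ_R = (id ⊗ π) ∘ Δ_P`, one has `χ(S(u₁) ⊗ u₂) = 1 ⊗ a` for any `u ∈ π⁻¹(a)`; hence
`τ(a) = S(u₁) ⊗_B u₂` defines a translation map on the quantum principal bundle
`P(B,A,π)` over the homogeneous space `B = P^A`. -/
theorem translation_map_homogeneous_space
    (Q : Type*) [Ring Q] [HopfAlgebra k Q]
    (π : Q →ₐc[k] A) (hπ : Function.Surjective π)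
    (ΔR : Q →ₗ[k] Q ⊗[k] A)
    (hΔR : ΔR = LinearMap.lTensor Q (π.toCoalgHom.toLinearMap) ∘ₗ Coalgebra.comul)
    (hfree : Function.Surjective (chiMap k A Q ΔR))
    (hexact : LinearMap.ker (chiMap k A Q ΔR) ⊓ LinearMap.ker (LinearMap.mul' k Q)
      = PB2P k A Q ΔR) :
    ∀ (a : A) (u : Q), π u = a →
      chiMap k A Q ΔR
        ((HopfAlgebra.antipode (R := k) (A := Q)).rTensor Q (Coalgebra.comul u))
      = (1 : Q) ⊗ₜ a := by
  intro a u hu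
  subst hu hΔR
  classical
  set S : Q →ₗ[k] Q := HopfAlgebra.antipode (R := k) (A := Q) with hS
  set πl : Q →ₗ[k] A := π.toCoalgHom.toLinearMap with hπl
  set repr := Coalgebra.Repr.arbitrary k u with hrepr
  set r1 : (i : Q × Q) → Coalgebra.Repr k (repr.left i) (Q × Q) :=
    fun i => Coalgebra.Repr.arbitrary k (repr.left i) with hr1
  set r2 : (i : Q × Q) → Coalgebra.Repr k (repr.right i) (Q × Q) :=
    fun i => Coalgebra.Repr.arbitrary k (repr.right i) with hr2
  have hLHS : chiMap k A Q (LinearMap.lTensor Q πl ∘ₗ Coalgebra.comul)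
        (S.rTensor Q (Coalgebra.comul u))
      = ∑ i ∈ repr.index, ∑ j ∈ (r2 i).index,
          (S (repr.left i) * (r2 i).left j) ⊗ₜ[k] πl ((r2 i).right j) := by
    rw [← repr.eq]
    rw [map_sum, map_sum]
    refine Finset.sum_congr rfl fun i _ => ?_
    rw [LinearMap.rTensor_tmul]
    simp only [chiMap, LinearMap.comp_apply, TensorProduct.map_tmul, LinearMap.id_coe, id_eq]
    rw [← (r2 i).eq]
    simp [map_sum, TensorProduct.tmul_sum]
  rw [hLHS]
  let g : Q ⊗[k] (Q ⊗[k] Q) →ₗ[k] Q ⊗[k] A :=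
    TensorProduct.map (LinearMap.mul' k Q ∘ₗ S.rTensor Q) πl ∘ₗ
      (TensorProduct.assoc k Q Q Q).symm.toLinearMap
  have hg : ∀ x y z : Q, g (x ⊗ₜ (y ⊗ₜ z)) = (S x * y) ⊗ₜ[k] πl z := by
    intro x y z
    simp [g]
  have key := Coalgebra.sum_tmul_tmul_eq repr r1 r2
  have key2 := congrArg g key
  simp only [map_sum, hg] at key2
  rw [← key2]
  have h3 : ∀ i ∈ repr.index, ∑ j ∈ (r1 i).index,
      (S ((r1 i).left j) * (r1 i).right j) ⊗ₜ[k] πl (repr.right i)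
      = (algebraMap k Q (Coalgebra.counit (repr.left i))) ⊗ₜ[k] πl (repr.right i) := by
    intro i _
    rw [← TensorProduct.sum_tmul, hS, HopfAlgebra.sum_antipode_mul_eq_algebraMap_counit (r1 i)]
  rw [Finset.sum_congr rfl h3]
  have h4 := congrArg (TensorProduct.map (Algebra.linearMap k Q) πl)
    (Coalgebra.sum_counit_tmul_eq repr)
  simp only [map_sum, TensorProduct.map_tmul, Algebra.linearMap_apply, map_one] at h4
  rw [h4]
  rfl
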